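/- The implicit Euler approximation y^n (piecewise-linearly interpolated) converges uniformly on [0,T] to the solution y of y_t = y₀ + a(1-β)∫₀ᵗ y_s^{-γ}e^{bs}ds + w̃_t, with rate n^{-α·min(1,γ)}: there is a constant C (depending on a, b, β, T, α, ‖w̃‖_{α-Höl}, ‖y‖_{α-Höl}, min_{[0,T]} y) such that ‖yⁿ - y‖_{∞;[0,T]} ≤ C n^{-α min(1,γ)} for all sufficiently large n. -/

import Mathlib

open Real Set

private lemma aux_rpow_lip {γ m : ℝ} (hγ : 0 < γ) (hm : 0 < m) {x z : ℝ}
    (hx : m ≤ x) (hz : m ≤ z) :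
    |x ^ (-γ) - z ^ (-γ)| ≤ γ * m ^ (-γ - 1) * |x - z| := by
  have hderiv : ∀ u ∈ Set.Ici m, HasDerivWithinAt (fun v : ℝ => v ^ (-γ))
      ((-γ) * u ^ (-γ - 1)) (Set.Ici m) u := by
    intro u hu
    have hu0 : u ≠ 0 := ne_of_gt (lt_of_lt_of_le hm hu)
    exact (Real.hasDerivAt_rpow_const (Or.inl hu0)).hasDerivWithinAt
  have hb : ∀ u ∈ Set.Ici m, ‖(-γ) * u ^ (-γ - 1)‖ ≤ γ * m ^ (-γ - 1) := by
    intro u hu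
    have hu' : m ≤ u := hu
    have h1 : u ^ (-γ - 1) ≤ m ^ (-γ - 1) :=
      Real.rpow_le_rpow_of_nonpos hm hu' (by linarith)
    have h2 : (0:ℝ) ≤ u ^ (-γ - 1) := Real.rpow_nonneg (by linarith) _
    rw [norm_mul, norm_neg, Real.norm_eq_abs, Real.norm_eq_abs,
      abs_of_pos hγ, abs_of_nonneg h2]
    exact mul_le_mul_of_nonneg_left h1 hγ.le
  have := Convex.norm_image_sub_le_of_norm_hasDerivWithin_le hderiv hb
    (convex_Ici m) hz hx
  simpa [Real.norm_eq_abs] using this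

private lemma aux_exp_lip {M : ℝ} {u v : ℝ} (hu : u ≤ M) (hv : v ≤ M) :
    |Real.exp u - Real.exp v| ≤ Real.exp M * |u - v| := by
  have hderiv : ∀ x ∈ Set.Iic M, HasDerivWithinAt Real.exp (Real.exp x) (Set.Iic M) x :=
    fun x _ => (Real.hasDerivAt_exp x).hasDerivWithinAt
  have hb : ∀ x ∈ Set.Iic M, ‖Real.exp x‖ ≤ Real.exp M := by
    intro x hx
    rw [Real.norm_eq_abs, abs_of_pos (Real.exp_pos x)]
    exact Real.exp_le_exp.2 hx
  have := Convex.norm_image_sub_le_of_norm_hasDerivWithin_le hderiv hb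
    (convex_Iic M) hv hu
  simpa [Real.norm_eq_abs] using this

private lemma aux_mono {γ : ℝ} (hγ : 0 < γ) {x z : ℝ} (hx : 0 < x) (hz : 0 < z) :
    (x ^ (-γ) - z ^ (-γ)) * (x - z) ≤ 0 := by
  rcases le_total x z with h | h
  · have : z ^ (-γ) ≤ x ^ (-γ) := Real.rpow_le_rpow_of_nonpos hx h (by linarith)
    exact mul_nonpos_of_nonneg_of_nonpos (by linarith) (by linarith)
  · have : x ^ (-γ) ≤ z ^ (-γ) := Real.rpow_le_rpow_of_nonpos hz h (by linarith)
    exact mul_nonpos_of_nonpos_of_nonneg (by linarith) (by linarith)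

/-- stability step: if e' - d*(f(Y')-f(y')) = e + r with monotone decrease, |e'| ≤ |e|+|r| -/
private lemma aux_stab {e' e r d u v : ℝ} (hd : 0 ≤ d) (hm : (u - v) * (e') ≤ 0)
    (heq : e' = e + d * (u - v) + r) : |e'| ≤ |e| + |r| := by
  rcases eq_or_lt_of_le (abs_nonneg e') with h0 | h0
  · rw [← h0]; positivity
  have key : |e'| * |e'| ≤ |e'| * (|e| + |r|) := by
    have h1 : e' * e ≤ |e'| * |e| := (le_abs_self _).trans (le_of_eq (abs_mul e' e))
    have h2 : e' * r ≤ |e'| * |r| := (le_abs_self _).trans (le_of_eq (abs_mul e' r))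
    have h3 : e' * e' = |e'| * |e'| := (abs_mul_abs_self e').symm
    have h4 : e' * e' = e' * e + d * ((u - v) * e') + e' * r := by
      nth_rewrite 1 [heq]; ring
    have h5 : 0 ≤ d * -((u - v) * e') := mul_nonneg hd (neg_nonneg.2 hm)
    linarith
  exact le_of_mul_le_mul_left (by linarith) h0

set_option maxHeartbeats 1000000 in
theorem stmt_14 (T a b α β γ y₀ Cw : ℝ) (w y : ℝ → ℝ) (Y : ℕ → ℕ → ℝ) (yI : ℕ → ℝ → ℝ)
    (hT : 0 < T) (ha : 0 < a) (hb : 0 ≤ b)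
    (hα : α ∈ Set.Ioc (0 : ℝ) 1) (hβ : β ∈ Set.Ioc (1 - α) 1) (hβ1 : β < 1)
    (hγ : γ = β / (1 - β)) (hy₀ : 0 < y₀)
    (hCw : 0 ≤ Cw)
    (hwHol : ∀ s ∈ Set.Icc (0 : ℝ) T, ∀ t ∈ Set.Icc (0 : ℝ) T,
      |w t - w s| ≤ Cw * |t - s| ^ α)
    (hw0 : w 0 = 0)
    (hyc : ContinuousOn y (Set.Icc 0 T))
    (hypos : ∀ t ∈ Set.Icc (0 : ℝ) T, 0 < y t)
    (heq : ∀ t ∈ Set.Icc (0 : ℝ) T,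
      y t = y₀ + a * (1 - β) * (∫ s in (0 : ℝ)..t, (y s) ^ (-γ) * Real.exp (b * s)) + w t)
    (hinit : ∀ n, Y n 0 = y₀)
    (hpos : ∀ n, ∀ k ≤ n, 0 < Y n k)
    (hrec : ∀ n, 0 < n → ∀ k < n,
      Y n (k + 1) = Y n k
        + (a * (1 - β) * T / n) * (Y n (k + 1)) ^ (-γ)
            * Real.exp (b * ((k + 1 : ℕ) * T / n))
        + w ((k + 1 : ℕ) * T / n) - w ((k : ℕ) * T / n))
    (hinterp : ∀ n : ℕ, 0 < n → ∀ k : ℕ, k < n →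
      ∀ t ∈ Set.Ico ((k : ℝ) * T / n) (((k + 1 : ℕ) : ℝ) * T / n),
        yI n t = Y n k + (Y n (k + 1) - Y n k) * (t - (k : ℝ) * T / n) / (T / n))
    (hinterpT : ∀ n, 0 < n → yI n T = Y n n) :
    ∃ C > (0 : ℝ), ∃ N : ℕ, ∀ n ≥ N, 0 < n →
      ∀ t ∈ Set.Icc (0 : ℝ) T,
        |yI n t - y t| ≤ C * (n : ℝ) ^ (-(α * min 1 γ)) := by
  obtain ⟨hα0, hα1⟩ := hα
  obtain ⟨hβl, _⟩ := hβ
  have h1β : 0 < 1 - β := by linarith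
  have hβ0 : 0 < β := by linarith
  have hγ0 : 0 < γ := by rw [hγ]; exact div_pos hβ0 h1β
  -- minimum of y
  obtain ⟨x₀, hx₀, hmin⟩ := isCompact_Icc.exists_isMinOn (Set.nonempty_Icc.2 hT.le) hyc
  set m := y x₀ with hmdef
  have hm0 : 0 < m := hypos x₀ hx₀
  have hmle : ∀ t ∈ Set.Icc (0:ℝ) T, m ≤ y t := fun t ht => hmin ht
  -- the integrand
  set g : ℝ → ℝ := fun s => y s ^ (-γ) * Real.exp (b * s) with hgdef
  have hgc : ContinuousOn g (Set.Icc 0 T) := by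
    apply ContinuousOn.mul
    · exact hyc.rpow_const (fun x hx => Or.inl (ne_of_gt (hypos x hx)))
    · exact (Real.continuous_exp.comp (continuous_const.mul continuous_id)).continuousOn
  have hgint : ∀ u ∈ Set.Icc (0:ℝ) T, ∀ v ∈ Set.Icc (0:ℝ) T,
      IntervalIntegrable g MeasureTheory.volume u v := by
    intro u hu v hv
    exact (hgc.mono (Set.uIcc_subset_Icc hu hv)).intervalIntegrable
  set M : ℝ := m ^ (-γ) * Real.exp (b * T) with hMdef
  have hM0 : 0 < M := by positivity
  have hgbd : ∀ s ∈ Set.Icc (0:ℝ) T, |g s| ≤ M := by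
    intro s hs
    have h1 : y s ^ (-γ) ≤ m ^ (-γ) :=
      Real.rpow_le_rpow_of_nonpos hm0 (hmle s hs) (by linarith)
    have h2 : Real.exp (b * s) ≤ Real.exp (b * T) :=
      Real.exp_le_exp.2 (mul_le_mul_of_nonneg_left hs.2 hb)
    have h3 : (0:ℝ) ≤ y s ^ (-γ) := Real.rpow_nonneg (hypos s hs).le _
    rw [abs_of_nonneg (by positivity)]
    exact mul_le_mul h1 h2 (Real.exp_pos _).le (Real.rpow_nonneg hm0.le _)
  -- y is α-Hölder
  set c : ℝ := a * (1 - β) with hcdef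
  have hc0 : 0 < c := by positivity
  set Cy : ℝ := c * M * T ^ (1 - α) + Cw with hCydef
  have hCy0 : 0 ≤ Cy := by positivity
  have hyinc : ∀ s ∈ Set.Icc (0:ℝ) T, ∀ t ∈ Set.Icc (0:ℝ) T,
      y t - y s = c * (∫ u in s..t, g u) + (w t - w s) := by
    intro s hs t ht
    have h0 : (0:ℝ) ∈ Set.Icc (0:ℝ) T := Set.left_mem_Icc.2 hT.le
    have e1 := heq t ht
    have e2 := heq s hs
    have e3 : (∫ u in (0:ℝ)..t, g u) - (∫ u in (0:ℝ)..s, g u) = ∫ u in s..t, g u :=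
      intervalIntegral.integral_interval_sub_left (hgint 0 h0 t ht) (hgint 0 h0 s hs)
    rw [e1, e2]; rw [← e3]; ring
  have habs_le : ∀ s ∈ Set.Icc (0:ℝ) T, ∀ t ∈ Set.Icc (0:ℝ) T,
      |t - s| ≤ T ^ (1 - α) * |t - s| ^ α := by
    intro s hs t ht
    rcases eq_or_ne t s with h | h
    · simp [h]; positivity
    · have hts : 0 < |t - s| := abs_pos.2 (sub_ne_zero.2 h)
      have h1 : |t - s| = |t - s| ^ (1 - α) * |t - s| ^ α := by
        rw [← Real.rpow_add hts]; norm_num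
      have habsT : |t - s| ≤ T := by
        rw [abs_sub_le_iff]
        constructor <;> linarith [hs.1, hs.2, ht.1, ht.2]
      calc |t - s| = |t - s| ^ (1 - α) * |t - s| ^ α := h1
        _ ≤ T ^ (1 - α) * |t - s| ^ α :=
            mul_le_mul_of_nonneg_right (Real.rpow_le_rpow hts.le habsT (by linarith))
              (Real.rpow_nonneg hts.le _)
  have hyHol : ∀ s ∈ Set.Icc (0:ℝ) T, ∀ t ∈ Set.Icc (0:ℝ) T,
      |y t - y s| ≤ Cy * |t - s| ^ α := by
    intro s hs t ht
    rw [hyinc s hs t ht]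
    have h1 : |∫ u in s..t, g u| ≤ M * |t - s| := by
      have := intervalIntegral.norm_integral_le_of_norm_le_const
        (C := M) (f := g) (a := s) (b := t) ?_
      · simpa [Real.norm_eq_abs] using this
      · intro x hx
        have : x ∈ Set.Icc (0:ℝ) T :=
          (Set.uIcc_subset_Icc hs ht) (Set.uIoc_subset_uIcc hx)
        simpa [Real.norm_eq_abs] using hgbd x this
    calc |c * (∫ u in s..t, g u) + (w t - w s)|
        ≤ |c * (∫ u in s..t, g u)| + |w t - w s| := abs_add_le _ _
      _ ≤ c * (M * |t - s|) + Cw * |t - s| ^ α := by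
          rw [abs_mul, abs_of_pos hc0]
          exact add_le_add (mul_le_mul_of_nonneg_left h1 hc0.le) (hwHol s hs t ht)
      _ ≤ c * (M * (T ^ (1 - α) * |t - s| ^ α)) + Cw * |t - s| ^ α := by
          have := habs_le s hs t ht
          have h2 : 0 ≤ c * M := by positivity
          nlinarith [this]
      _ = Cy * |t - s| ^ α := by rw [hCydef]; ring
  -- g is α-Hölder
  set Lg : ℝ := γ * m ^ (-γ - 1) * Cy * Real.exp (b * T)
      + m ^ (-γ) * (b * Real.exp (b * T)) * T ^ (1 - α) with hLgdef
  have hLg0 : 0 ≤ Lg := by positivity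
  have hgHol : ∀ s ∈ Set.Icc (0:ℝ) T, ∀ t ∈ Set.Icc (0:ℝ) T,
      |g t - g s| ≤ Lg * |t - s| ^ α := by
    intro s hs t ht
    have hdecomp : g t - g s
        = (y t ^ (-γ) - y s ^ (-γ)) * Real.exp (b * t)
          + y s ^ (-γ) * (Real.exp (b * t) - Real.exp (b * s)) := by
      simp only [hgdef]; ring
    have h1 : |y t ^ (-γ) - y s ^ (-γ)| ≤ γ * m ^ (-γ - 1) * |y t - y s| :=
      aux_rpow_lip hγ0 hm0 (hmle t ht) (hmle s hs)
    have h2 : |Real.exp (b * t) - Real.exp (b * s)| ≤ Real.exp (b * T) * |b * t - b * s| :=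
      aux_exp_lip (mul_le_mul_of_nonneg_left ht.2 hb) (mul_le_mul_of_nonneg_left hs.2 hb)
    have h2' : |b * t - b * s| = b * |t - s| := by
      rw [← mul_sub, abs_mul, abs_of_nonneg hb]
    have h3 : y s ^ (-γ) ≤ m ^ (-γ) :=
      Real.rpow_le_rpow_of_nonpos hm0 (hmle s hs) (by linarith)
    have h4 : (0:ℝ) ≤ y s ^ (-γ) := Real.rpow_nonneg (hypos s hs).le _
    have h5 : Real.exp (b * t) ≤ Real.exp (b * T) :=
      Real.exp_le_exp.2 (mul_le_mul_of_nonneg_left ht.2 hb)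
    have hHolY := hyHol s hs t ht
    have hTle := habs_le s hs t ht
    rw [hdecomp]
    calc |(y t ^ (-γ) - y s ^ (-γ)) * Real.exp (b * t)
          + y s ^ (-γ) * (Real.exp (b * t) - Real.exp (b * s))|
        ≤ |y t ^ (-γ) - y s ^ (-γ)| * Real.exp (b * t)
          + y s ^ (-γ) * |Real.exp (b * t) - Real.exp (b * s)| := by
          refine (abs_add_le _ _).trans ?_
          rw [abs_mul, abs_mul, abs_of_pos (Real.exp_pos _), abs_of_nonneg h4]
      _ ≤ (γ * m ^ (-γ - 1) * (Cy * |t - s| ^ α)) * Real.exp (b * T)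
          + m ^ (-γ) * (Real.exp (b * T) * (b * |t - s|)) := by
          apply add_le_add
          · have ha1 : |y t ^ (-γ) - y s ^ (-γ)| ≤ γ * m ^ (-γ - 1) * (Cy * |t - s| ^ α) := by
              refine h1.trans ?_
              exact mul_le_mul_of_nonneg_left hHolY (by positivity)
            have hexp0 : (0:ℝ) < Real.exp (b * t) := Real.exp_pos _
            calc |y t ^ (-γ) - y s ^ (-γ)| * Real.exp (b * t)
                ≤ (γ * m ^ (-γ - 1) * (Cy * |t - s| ^ α)) * Real.exp (b * t) :=
                  mul_le_mul_of_nonneg_right ha1 hexp0.le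
              _ ≤ _ := mul_le_mul_of_nonneg_left h5 (by positivity)
          · calc y s ^ (-γ) * |Real.exp (b * t) - Real.exp (b * s)|
                ≤ y s ^ (-γ) * (Real.exp (b * T) * (b * |t - s|)) := by
                  apply mul_le_mul_of_nonneg_left _ h4
                  rw [← h2']; exact h2
              _ ≤ _ := mul_le_mul_of_nonneg_right h3 (by positivity)
      _ ≤ Lg * |t - s| ^ α := by
          have hb1 : b * |t - s| ≤ b * (T ^ (1 - α) * |t - s| ^ α) :=
            mul_le_mul_of_nonneg_left hTle hb
          rw [hLgdef]
          nlinarith [Real.exp_pos (b * T), Real.rpow_nonneg hm0.le (-γ),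
            Real.rpow_nonneg hm0.le (-γ - 1), mul_nonneg hγ0.le (Real.rpow_nonneg hm0.le (-γ-1)),
            Real.rpow_nonneg (abs_nonneg (t - s)) α]
  -- y 0 = y₀
  have hy0 : y 0 = y₀ := by
    have := heq 0 (Set.left_mem_Icc.2 hT.le)
    simpa [intervalIntegral.integral_same, hw0] using this
  -- the constant
  have hT1α : (0:ℝ) ≤ T ^ (1 + α) := Real.rpow_nonneg hT.le _
  have hTα : (0:ℝ) ≤ T ^ α := Real.rpow_nonneg hT.le _
  have hK0 : (0:ℝ) ≤ 3 * (c * Lg * T ^ (1 + α)) + 2 * (Cy * T ^ α) := by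
    have h1 := mul_nonneg (mul_nonneg hc0.le hLg0) hT1α
    have h2 := mul_nonneg hCy0 hTα
    linarith
  refine ⟨3 * (c * Lg * T ^ (1 + α)) + 2 * (Cy * T ^ α) + 1, by linarith, 1, ?_⟩
  intro n hn1 hn0 t ht
  have hnR : (0:ℝ) < n := Nat.cast_pos.2 hn0
  set h : ℝ := T / n with hhdef
  have hh0 : 0 < h := by positivity
  have htkmem : ∀ k : ℕ, k ≤ n → ((k:ℝ) * T / n) ∈ Set.Icc (0:ℝ) T := by
    intro k hk
    constructor
    · positivity
    · rw [div_le_iff₀ hnR]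
      have : (k:ℝ) ≤ n := Nat.cast_le.2 hk
      nlinarith
  have hstep : ∀ k : ℕ, ((k + 1 : ℕ):ℝ) * T / n - (k:ℝ) * T / n = h := by
    intro k; rw [hhdef]; push_cast; field_simp; ring
  set B : ℝ := c * (Lg * h ^ α * h) with hBdef
  have hB0 : 0 ≤ B := by positivity
  -- grid error bound by induction
  have hgrid : ∀ k : ℕ, k ≤ n → |Y n k - y ((k:ℝ) * T / n)| ≤ k * B := by
    intro k
    induction k with
    | zero =>
      intro _
      have h0 : ((0:ℕ):ℝ) * T / n = 0 := by norm_num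
      rw [hinit n, h0, hy0]
      simp
    | succ k ih =>
      intro hk1
      have hkn : k < n := hk1
      have ihk := ih hkn.le
      set tk : ℝ := (k:ℝ) * T / n with htkdef
      set tk1 : ℝ := ((k + 1 : ℕ):ℝ) * T / n with htk1def
      have htkI : tk ∈ Set.Icc (0:ℝ) T := htkmem k hkn.le
      have htk1I : tk1 ∈ Set.Icc (0:ℝ) T := htkmem (k+1) hk1
      have hyeq : y tk1 - y tk = c * (∫ u in tk..tk1, g u) + (w tk1 - w tk) :=
        hyinc tk htkI tk1 htk1I
      have hint : IntervalIntegrable g MeasureTheory.volume tk tk1 :=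
        hgint tk htkI tk1 htk1I
      have htktk1 : tk ≤ tk1 := by
        have := hstep k
        rw [← htkdef, ← htk1def] at this
        linarith
      -- truncation error
      have htrunc : |h * g tk1 - ∫ u in tk..tk1, g u| ≤ Lg * h ^ α * h := by
        have heqi : h * g tk1 - ∫ u in tk..tk1, g u
            = ∫ u in tk..tk1, (g tk1 - g u) := by
          rw [intervalIntegral.integral_sub intervalIntegrable_const hint,
            intervalIntegral.integral_const]
          have h1 : tk1 - tk = h := hstep k
          rw [h1, smul_eq_mul]
        rw [heqi]
        have hbound := intervalIntegral.norm_integral_le_of_norm_le_const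
          (C := Lg * h ^ α) (f := fun u => g tk1 - g u) (a := tk) (b := tk1) ?_
        · have habs : |tk1 - tk| = h := by rw [hstep k]; exact abs_of_pos hh0
          rw [Real.norm_eq_abs, habs] at hbound
          exact hbound
        · intro x hx
          rw [Set.uIoc_of_le htktk1] at hx
          have hxI : x ∈ Set.Icc (0:ℝ) T :=
            ⟨le_trans htkI.1 hx.1.le, le_trans hx.2 htk1I.2⟩
          have hxd : |tk1 - x| ≤ h := by
            rw [abs_of_nonneg (by linarith [hx.2])]
            have := hstep k
            rw [← htkdef, ← htk1def] at this
            linarith [hx.1]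
          calc ‖g tk1 - g x‖ = |g tk1 - g x| := rfl
            _ ≤ Lg * |tk1 - x| ^ α := hgHol x hxI tk1 htk1I
            _ ≤ Lg * h ^ α :=
                mul_le_mul_of_nonneg_left
                  (Real.rpow_le_rpow (abs_nonneg _) hxd hα0.le) hLg0
      -- recursion identity and stability
      have hrk := hrec n hn0 k hkn
      have hkey : Y n (k+1) - y tk1
          = (Y n k - y tk)
            + (c * T / n * Real.exp (b * tk1)) * ((Y n (k+1)) ^ (-γ) - (y tk1) ^ (-γ))
            + c * (h * g tk1 - ∫ u in tk..tk1, g u) := by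
        have hgv : g tk1 = y tk1 ^ (-γ) * Real.exp (b * tk1) := rfl
        rw [← htk1def, ← htkdef] at hrk
        rw [hgv, hhdef]
        linear_combination hrk - hyeq
      have hstab := aux_stab (e' := Y n (k+1) - y tk1) (e := Y n k - y tk)
        (r := c * (h * g tk1 - ∫ u in tk..tk1, g u))
        (d := c * T / n * Real.exp (b * tk1))
        (u := (Y n (k+1)) ^ (-γ)) (v := (y tk1) ^ (-γ))
        (by positivity)
        (by
          have := aux_mono hγ0 (hpos n (k+1) hk1) (hypos tk1 htk1I)
          linarith [this])
        hkey
      have hrle : |c * (h * g tk1 - ∫ u in tk..tk1, g u)| ≤ B := by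
        rw [abs_mul, abs_of_pos hc0, hBdef]
        exact mul_le_mul_of_nonneg_left htrunc hc0.le
      refine le_trans hstab ?_
      push_cast
      linarith [ihk, hrle]
  -- convert powers
  have hhα : h ^ α = T ^ α * (n:ℝ) ^ (-α) := by
    rw [hhdef, Real.div_rpow hT.le hnR.le, Real.rpow_neg hnR.le, div_eq_mul_inv]
  have hTn : (n:ℝ) * h = T := by rw [hhdef]; field_simp
  have hnB : (n:ℝ) * B = c * Lg * T ^ (1 + α) * (n:ℝ) ^ (-α) := by
    have h1 : T ^ (1 + α) = T * T ^ α := by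
      rw [Real.rpow_add hT, Real.rpow_one]
    rw [hBdef, hhα, h1]
    calc (n:ℝ) * (c * (Lg * (T ^ α * (n:ℝ) ^ (-α)) * h))
        = c * Lg * T ^ α * (n:ℝ) ^ (-α) * ((n:ℝ) * h) := by ring
      _ = c * Lg * (T * T ^ α) * (n:ℝ) ^ (-α) := by rw [hTn]; ring
  have hhα0 : 0 ≤ Cy * h ^ α := by positivity
  have hnB0 : 0 ≤ (n:ℝ) * B := by positivity
  -- main estimate
  have hmain : |yI n t - y t| ≤ 3 * ((n:ℝ) * B) + 2 * (Cy * h ^ α) := by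
    rcases eq_or_lt_of_le ht.2 with hTt | hTt
    · -- t = T
      have hTg : ((n:ℕ):ℝ) * T / n = T := by field_simp
      have hgn := hgrid n le_rfl
      rw [hTg] at hgn
      rw [hTt, hinterpT n hn0]
      linarith [hgn]
    · -- t < T
      set k : ℕ := ⌊t / h⌋₊ with hkdef
      have ht0 : 0 ≤ t := ht.1
      have hth : 0 ≤ t / h := by positivity
      have hkle : (k:ℝ) ≤ t / h := Nat.floor_le hth
      have hklt1 : t / h < (k:ℝ) + 1 := Nat.lt_floor_add_one _
      have hkn : k < n := by
        have h2 : t / h < n := by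
          rw [div_lt_iff₀ hh0]
          calc t < T := hTt
            _ = (n:ℝ) * h := hTn.symm
        exact (Nat.floor_lt hth).2 h2
      set tk : ℝ := (k:ℝ) * T / n with htkdef
      set tk1 : ℝ := ((k + 1 : ℕ):ℝ) * T / n with htk1def
      have htkh : tk = (k:ℝ) * h := by rw [htkdef, hhdef]; ring
      have htk1h : tk1 = ((k:ℝ) + 1) * h := by rw [htk1def, hhdef]; push_cast; ring
      have hlow : tk ≤ t := by
        rw [htkh]; exact (le_div_iff₀ hh0).1 hkle
      have hhigh : t < tk1 := by
        rw [htk1h]; exact (div_lt_iff₀ hh0).1 hklt1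
      have htkI : tk ∈ Set.Icc (0:ℝ) T := htkmem k hkn.le
      have htk1I : tk1 ∈ Set.Icc (0:ℝ) T := htkmem (k+1) hkn
      have hstepk : tk1 - tk = h := by rw [htkh, htk1h]; ring
      have hyIt := hinterp n hn0 k hkn t ⟨hlow, hhigh⟩
      rw [← htkdef] at hyIt
      -- grid errors
      have hek : |Y n k - y tk| ≤ (n:ℝ) * B := by
        refine (hgrid k hkn.le).trans ?_
        exact mul_le_mul_of_nonneg_right (Nat.cast_le.2 hkn.le) hB0
      have hek1 : |Y n (k+1) - y tk1| ≤ (n:ℝ) * B := by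
        refine (hgrid (k+1) hkn).trans ?_
        exact mul_le_mul_of_nonneg_right (Nat.cast_le.2 hkn) hB0
      -- Hölder on the small interval
      have hstep1 : |y tk1 - y tk| ≤ Cy * h ^ α := by
        have h1 := hyHol tk htkI tk1 htk1I
        have habs : |tk1 - tk| = h := by rw [hstepk]; exact abs_of_pos hh0
        rwa [habs] at h1
      have hstep2 : |y tk - y t| ≤ Cy * h ^ α := by
        have h1 := hyHol t ht tk htkI
        have habs : |tk - t| ≤ h := by
          rw [abs_of_nonpos (by linarith)]
          linarith
        refine h1.trans ?_
        exact mul_le_mul_of_nonneg_left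
          (Real.rpow_le_rpow (abs_nonneg _) habs hα0.le) hCy0
      -- theta
      set θ : ℝ := (t - tk) / (T / (n:ℝ)) with hθdef
      have hTn0 : (0:ℝ) < T / n := by positivity
      have hθ0 : 0 ≤ θ := div_nonneg (by linarith) hTn0.le
      have hθ1 : θ ≤ 1 := by
        rw [hθdef, div_le_one hTn0]
        have : T / (n:ℝ) = h := hhdef.symm
        rw [this]
        linarith
      have hyIt' : yI n t = Y n k + (Y n (k+1) - Y n k) * θ := by
        rw [hyIt, hθdef]; ring
      -- decompose
      have hdiff : yI n t - y t
          = (Y n k - y tk) + (Y n (k+1) - Y n k) * θ + (y tk - y t) := by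
        rw [hyIt']; ring
      have hΔ : |Y n (k+1) - Y n k| ≤ 2 * ((n:ℝ) * B) + Cy * h ^ α := by
        obtain ⟨a1, a2⟩ := abs_le.1 hek1
        obtain ⟨b1, b2⟩ := abs_le.1 hek
        obtain ⟨c1, c2⟩ := abs_le.1 hstep1
        rw [abs_le]
        constructor <;> linarith
      have hΔθ : |(Y n (k+1) - Y n k) * θ| ≤ 2 * ((n:ℝ) * B) + Cy * h ^ α := by
        rw [abs_mul, abs_of_nonneg hθ0]
        calc |Y n (k+1) - Y n k| * θ ≤ |Y n (k+1) - Y n k| * 1 :=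
              mul_le_mul_of_nonneg_left hθ1 (abs_nonneg _)
          _ = |Y n (k+1) - Y n k| := mul_one _
          _ ≤ _ := hΔ
      calc |yI n t - y t|
          ≤ |Y n k - y tk| + |(Y n (k+1) - Y n k) * θ| + |y tk - y t| := by
            rw [hdiff]
            exact (abs_add_le _ _).trans (add_le_add_left (abs_add_le _ _) _)
        _ ≤ (n:ℝ) * B + (2 * ((n:ℝ) * B) + Cy * h ^ α) + Cy * h ^ α :=
            add_le_add (add_le_add hek hΔθ) hstep2
        _ = 3 * ((n:ℝ) * B) + 2 * (Cy * h ^ α) := by ring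
  -- conclude
  have hKn : 3 * ((n:ℝ) * B) + 2 * (Cy * h ^ α)
      = (3 * (c * Lg * T ^ (1 + α)) + 2 * (Cy * T ^ α)) * (n:ℝ) ^ (-α) := by
    rw [hnB, hhα]; ring
  have hexp : (n:ℝ) ^ (-α) ≤ (n:ℝ) ^ (-(α * min 1 γ)) := by
    apply Real.rpow_le_rpow_of_exponent_le (by exact_mod_cast hn1)
    have h1 : min 1 γ ≤ 1 := min_le_left _ _
    nlinarith
  have hrp0 : (0:ℝ) ≤ (n:ℝ) ^ (-α) := Real.rpow_nonneg hnR.le _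
  calc |yI n t - y t|
      ≤ (3 * (c * Lg * T ^ (1 + α)) + 2 * (Cy * T ^ α)) * (n:ℝ) ^ (-α) := by
        rw [← hKn]; exact hmain
    _ ≤ (3 * (c * Lg * T ^ (1 + α)) + 2 * (Cy * T ^ α) + 1) * (n:ℝ) ^ (-(α * min 1 γ)) :=
        mul_le_mul (by linarith) hexp hrp0 (by linarith)
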